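/- Let U and U' be d-dimensional subspaces of a real inner product space with orthogonal projections P_U and P_{U'}. If u_1,…,u_d and u'_1,…,u'_d are orthonormal bases for U and U' respectively such that ⟨u_i, u'_i⟩ ≥ β for all i, then the operator norm ‖P_U − P_{U'}‖ ≤ d·√(1−β²). -/

import Mathlib

open scoped InnerProductSpace

lemma proj_eq_sum' {V : Type*} [NormedAddCommGroup V] [InnerProductSpace ℝ V]
    [FiniteDimensional ℝ V] {d : ℕ} (v : Fin d → V) (hv : Orthonormal ℝ v) (x : V) :
    ((Submodule.span ℝ (Set.range v)).orthogonalProjection x : V) = ∑ i, ⟪v i, x⟫_ℝ • v i := by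
  rw [← Submodule.starProjection_apply]
  apply Submodule.eq_starProjection_of_mem_of_inner_eq_zero
  · exact Submodule.sum_mem _ fun i _ =>
      Submodule.smul_mem _ _ (Submodule.subset_span (Set.mem_range_self i))
  · intro w hw
    induction hw using Submodule.span_induction with
    | mem y hy =>
      obtain ⟨j, rfl⟩ := hy
      simp [inner_sub_left, sum_inner, real_inner_smul_left, orthonormal_iff_ite.mp hv,
        real_inner_comm x (v j)]
    | zero => simp
    | add y z _ _ hy hz => rw [inner_add_right, hy, hz, add_zero]
    | smul c y _ hy => rw [inner_smul_right, hy, mul_zero]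

lemma term_bound' {V : Type*} [NormedAddCommGroup V] [InnerProductSpace ℝ V]
    (β : ℝ) (hβ0 : 0 ≤ β) (a b : V) (x : V) (ha : ‖a‖ = 1) (hb : ‖b‖ = 1)
    (hc : β ≤ ⟪a, b⟫_ℝ) :
    ‖⟪a, x⟫_ℝ • a - ⟪b, x⟫_ℝ • b‖ ≤ Real.sqrt (1 - β ^ 2) * ‖x‖ := by
  obtain ⟨p, hp⟩ : ∃ p, ⟪a, x⟫_ℝ = p := ⟨_, rfl⟩
  obtain ⟨q, hq⟩ : ∃ q, ⟪b, x⟫_ℝ = q := ⟨_, rfl⟩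
  obtain ⟨c, hcc⟩ : ∃ c, ⟪a, b⟫_ℝ = c := ⟨_, rfl⟩
  rw [hcc] at hc
  have hc1 : c ≤ 1 := by
    have := real_inner_le_norm a b
    rw [ha, hb, hcc] at this; linarith
  have haa : ⟪a, a⟫_ℝ = 1 := by rw [real_inner_self_eq_norm_sq, ha]; norm_num
  have hbb : ⟪b, b⟫_ℝ = 1 := by rw [real_inner_self_eq_norm_sq, hb]; norm_num
  have hba : ⟪b, a⟫_ℝ = c := by rw [← hcc]; exact (real_inner_comm b a).symm
  have hxa : ⟪x, a⟫_ℝ = p := by rw [← hp]; exact (real_inner_comm x a).symm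
  have hxb : ⟪x, b⟫_ℝ = q := by rw [← hq]; exact (real_inner_comm x b).symm
  have hxx : ⟪x, x⟫_ℝ = ‖x‖ ^ 2 := real_inner_self_eq_norm_sq x
  have hCS := real_inner_mul_inner_self_le (b - c • a) (x - p • a)
  have e1 : ⟪b - c • a, x - p • a⟫_ℝ = q - c * p := by
    simp only [inner_sub_left, inner_sub_right, real_inner_smul_left, real_inner_smul_right,
      haa, hba, hq, hp]
    ring
  have e2 : ⟪b - c • a, b - c • a⟫_ℝ = 1 - c ^ 2 := by
    simp only [inner_sub_left, inner_sub_right, real_inner_smul_left, real_inner_smul_right,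
      haa, hbb, hba, hcc]
    ring
  have e3 : ⟪x - p • a, x - p • a⟫_ℝ = ‖x‖ ^ 2 - p ^ 2 := by
    simp only [inner_sub_left, inner_sub_right, real_inner_smul_left, real_inner_smul_right,
      haa, hxa, hp, hxx]
    ring
  rw [e1, e2, e3] at hCS
  have hT : ‖⟪a, x⟫_ℝ • a - ⟪b, x⟫_ℝ • b‖ ^ 2 = p ^ 2 + q ^ 2 - 2 * p * q * c := by
    rw [← real_inner_self_eq_norm_sq]
    simp only [inner_sub_left, inner_sub_right, real_inner_smul_left, real_inner_smul_right,
      haa, hbb, hba, hcc, hp, hq]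
    ring
  have key : ‖⟪a, x⟫_ℝ • a - ⟪b, x⟫_ℝ • b‖ ^ 2 ≤ (1 - β ^ 2) * ‖x‖ ^ 2 := by
    rw [hT]
    have h1 : 0 ≤ (c - β) * (c + β) * ‖x‖ ^ 2 :=
      mul_nonneg (mul_nonneg (by linarith) (by linarith)) (sq_nonneg _)
    nlinarith [hCS, h1]
  calc ‖⟪a, x⟫_ℝ • a - ⟪b, x⟫_ℝ • b‖
      = Real.sqrt (‖⟪a, x⟫_ℝ • a - ⟪b, x⟫_ℝ • b‖ ^ 2) := by
        rw [Real.sqrt_sq (norm_nonneg _)]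
    _ ≤ Real.sqrt ((1 - β ^ 2) * ‖x‖ ^ 2) := Real.sqrt_le_sqrt key
    _ = Real.sqrt (1 - β ^ 2) * ‖x‖ := by
        rw [Real.sqrt_mul (by nlinarith : (0:ℝ) ≤ 1 - β ^ 2), Real.sqrt_sq (norm_nonneg _)]

theorem stmt1 {V : Type*} [NormedAddCommGroup V] [InnerProductSpace ℝ V]
    [FiniteDimensional ℝ V] {d : ℕ} (β : ℝ) (hβ0 : 0 ≤ β) (hβ1 : β ≤ 1)
    (u u' : Fin d → V) (hu : Orthonormal ℝ u) (hu' : Orthonormal ℝ u')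
    (U U' : Submodule ℝ V)
    (hU : U = Submodule.span ℝ (Set.range u))
    (hU' : U' = Submodule.span ℝ (Set.range u'))
    (hip : ∀ i, β ≤ ⟪u i, u' i⟫_ℝ) :
    ‖(U.subtypeL ∘L U.orthogonalProjection) - (U'.subtypeL ∘L U'.orthogonalProjection)‖ ≤
      d * Real.sqrt (1 - β ^ 2) := by
  subst hU hU'
  apply ContinuousLinearMap.opNorm_le_bound _
    (mul_nonneg (Nat.cast_nonneg d) (Real.sqrt_nonneg _))
  intro x
  have hx : ((Submodule.span ℝ (Set.range u)).subtypeL ∘L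
        (Submodule.span ℝ (Set.range u)).orthogonalProjection -
      (Submodule.span ℝ (Set.range u')).subtypeL ∘L
        (Submodule.span ℝ (Set.range u')).orthogonalProjection) x
      = ∑ i, (⟪u i, x⟫_ℝ • u i - ⟪u' i, x⟫_ℝ • u' i) := by
    simp only [ContinuousLinearMap.sub_apply, ContinuousLinearMap.comp_apply,
      Submodule.subtypeL_apply, Finset.sum_sub_distrib]
    rw [proj_eq_sum' u hu x, proj_eq_sum' u' hu' x]
  rw [hx]
  calc ‖∑ i, (⟪u i, x⟫_ℝ • u i - ⟪u' i, x⟫_ℝ • u' i)‖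
      ≤ ∑ i, ‖⟪u i, x⟫_ℝ • u i - ⟪u' i, x⟫_ℝ • u' i‖ := norm_sum_le _ _
    _ ≤ ∑ _i : Fin d, Real.sqrt (1 - β ^ 2) * ‖x‖ := by
        apply Finset.sum_le_sum
        intro i _
        exact term_bound' β hβ0 (u i) (u' i) x (hu.1 i) (hu'.1 i) (hip i)
    _ = d * Real.sqrt (1 - β ^ 2) * ‖x‖ := by
        rw [Finset.sum_const, Finset.card_univ, Fintype.card_fin]
        simp [mul_assoc]
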